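/- Let B_W ∈ {0,1}^{p×p} and B_V ∈ {0,1}^{p×m} be binary matrices and K ∈ ℝ^{(n−p)×p}. For each i ∈ {1,…,p} with e_i^T·A12 ≠ 0, fix an orthogonal Q_i ∈ ℝ^{(n−p)×(n−p)} with e_i^T·A12·Q_i^T = ‖e_i^T·A12‖·e_{n−p}^T and an integer 1 ≤ n_i ≤ n−p. Assume for each i ∈ {1,…,p}: (i) (A11 − A12·K)_{ij} = 0 whenever (B_W)_{ij} = 0, for all j; (ii) (B1)_{ik} = 0 whenever (B_V)_{ik} = 0, for all k; and, whenever e_i^T·A12 ≠ 0: (iii) [0, I_{n_i}]·Q_i·A_K·e_j = 0 whenever (B_W)_{ij} = 0; (iv) [0, I_{n_i}]·Q_i·(K·B1 + B2)·e_k = 0 whenever (B_V)_{ik} = 0; (v) [0, I_{n_i}]·Q_i·(A22 + K·A12)·Q_i^T·[I_{n−p−n_i}; 0] = 0; (vi) the matrix [0, I_{n_i}]·Q_i·(A22 + K·A12)·Q_i^T·[0, I_{n_i}]^T ∈ ℝ^{n_i×n_i} is Hurwitz. Then every entry of W and of V is stable, and for all i, j, k: (B_W)_{ij} = 0 implies W_{ij}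 = 0 in F, and (B_V)_{ik} = 0 implies V_{ik} = 0 in F. -/

import Mathlib

open Matrix Polynomial

set_option synthInstance.maxHeartbeats 1000000
set_option maxHeartbeats 1000000

noncomputable section

/-- The field of real rational functions. -/
abbrev FF : Type := RatFunc ℝ

/-- The rational function `λ` (the image of the polynomial indeterminate `X`). -/
noncomputable def lam : FF := RatFunc.X

/-- Entrywise embedding of a real matrix into matrices over `FF`. -/
noncomputable def mapF {k l : Type} (M : Matrix k l ℝ) : Matrix k l FF :=
  M.map (algebraMap ℝ FF)

/-- The pencil `λ I - M` over `FF`, for a real square matrix `M`. -/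
noncomputable def lamI {k : Type} [Fintype k] [DecidableEq k] (M : Matrix k k ℝ) :
    Matrix k k FF := lam • (1 : Matrix k k FF) - mapF M

/-- Entrywise complexification of a real matrix. -/
def mapC {k l : Type} (M : Matrix k l ℝ) : Matrix k l ℂ :=
  M.map (algebraMap ℝ ℂ)

/-- A real rational function is stable if every complex root of its reduced denominator
has real part `< 0`. -/
def StableF (f : RatFunc ℝ) : Prop :=
  ∀ z : ℂ, ((f.denom).map (algebraMap ℝ ℂ)).IsRoot z → z.re < 0

/-- A real square matrix is Hurwitz if all roots of its characteristic polynomial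
have real part `< 0`. -/
def IsHurwitz {k : Type} [Fintype k] [DecidableEq k] (M : Matrix k k ℝ) : Prop :=
  ∀ z : ℂ, ((M.charpoly).map (algebraMap ℝ ℂ)).IsRoot z → z.re < 0

/-- `A_K := K A11 - K A12 K + A21 - A22 K`. -/
noncomputable def AKmat {p r : ℕ} (A11 : Matrix (Fin p) (Fin p) ℝ)
    (A12 : Matrix (Fin p) (Fin r) ℝ) (A21 : Matrix (Fin r) (Fin p) ℝ)
    (A22 : Matrix (Fin r) (Fin r) ℝ) (K : Matrix (Fin r) (Fin p) ℝ) :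
    Matrix (Fin r) (Fin p) ℝ :=
  K * A11 - K * A12 * K + A21 - A22 * K

/-- The `W` member of the SRTR pair obtained from `K`. -/
noncomputable def srtrW {p r : ℕ} (A11 : Matrix (Fin p) (Fin p) ℝ)
    (A12 : Matrix (Fin p) (Fin r) ℝ) (A21 : Matrix (Fin r) (Fin p) ℝ)
    (A22 : Matrix (Fin r) (Fin r) ℝ) (K : Matrix (Fin r) (Fin p) ℝ) :
    Matrix (Fin p) (Fin p) FF :=
  mapF (A11 - A12 * K) +
    mapF A12 * (lamI (A22 + K * A12))⁻¹ * mapF (AKmat A11 A12 A21 A22 K)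

/-- The `V` member of the SRTR pair obtained from `K`. -/
noncomputable def srtrV {p r m : ℕ} (A12 : Matrix (Fin p) (Fin r) ℝ)
    (A22 : Matrix (Fin r) (Fin r) ℝ) (B1 : Matrix (Fin p) (Fin m) ℝ)
    (B2 : Matrix (Fin r) (Fin m) ℝ) (K : Matrix (Fin r) (Fin p) ℝ) :
    Matrix (Fin p) (Fin m) FF :=
  mapF B1 + mapF A12 * (lamI (A22 + K * A12))⁻¹ * mapF (K * B1 + B2)

/-- The plant transfer function `G = [I_p 0] (λ I_n - A)⁻¹ B`. -/
noncomputable def plantG {p r m : ℕ} (A11 : Matrix (Fin p) (Fin p) ℝ)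
    (A12 : Matrix (Fin p) (Fin r) ℝ) (A21 : Matrix (Fin r) (Fin p) ℝ)
    (A22 : Matrix (Fin r) (Fin r) ℝ) (B1 : Matrix (Fin p) (Fin m) ℝ)
    (B2 : Matrix (Fin r) (Fin m) ℝ) : Matrix (Fin p) (Fin m) FF :=
  fromCols (1 : Matrix (Fin p) (Fin p) FF) (0 : Matrix (Fin p) (Fin r) FF) *
    (lamI (fromBlocks A11 A12 A21 A22))⁻¹ * mapF (fromRows B1 B2)

/-- `(A12, A22)` is observable: `[A22 - μ I ; A12]` has full column rank for all `μ : ℂ`. -/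
def ObsPair {p r : ℕ} (A12 : Matrix (Fin p) (Fin r) ℝ)
    (A22 : Matrix (Fin r) (Fin r) ℝ) : Prop :=
  ∀ μ : ℂ, (fromRows (mapC A22 - μ • (1 : Matrix (Fin r) (Fin r) ℂ)) (mapC A12)).rank = r

/-- `(A, B)` is controllable: `[A - μ I, B]` has full row rank for all `μ : ℂ`. -/
def CtrbPair {p r m : ℕ} (A : Matrix (Fin p ⊕ Fin r) (Fin p ⊕ Fin r) ℝ)
    (B : Matrix (Fin p ⊕ Fin r) (Fin m) ℝ) : Prop :=
  ∀ μ : ℂ, (fromCols (mapC A - μ • (1 : Matrix (Fin p ⊕ Fin r) (Fin p ⊕ Fin r) ℂ))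
    (mapC B)).rank = p + r

lemma algebraMap_R_FF (a : ℝ) :
    algebraMap ℝ FF a = algebraMap ℝ[X] FF (C a) := by
  rw [IsScalarTower.algebraMap_apply ℝ ℝ[X] FF, Polynomial.algebraMap_eq]

lemma lamI_eq_map {k : Type} [Fintype k] [DecidableEq k] (M : Matrix k k ℝ) :
    lamI M = (charmatrix M).map (algebraMap ℝ[X] FF) := by
  ext i j
  by_cases h : i = j
  · subst h
    simp [lamI, charmatrix_apply_eq, mapF, lam, Matrix.smul_apply, Matrix.one_apply,
      algebraMap_R_FF, RatFunc.algebraMap_X]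
  · simp [lamI, charmatrix_apply_ne _ _ _ h, mapF, Matrix.smul_apply, Matrix.one_apply_ne h,
      algebraMap_R_FF]

lemma det_lamI {k : Type} [Fintype k] [DecidableEq k] (M : Matrix k k ℝ) :
    (lamI M).det = algebraMap ℝ[X] FF M.charpoly := by
  rw [lamI_eq_map, ← RingHom.mapMatrix_apply, ← RingHom.map_det]
  rfl

lemma charpoly_FF_ne_zero {k : Type} [Fintype k] [DecidableEq k] (M : Matrix k k ℝ) :
    algebraMap ℝ[X] FF M.charpoly ≠ 0 :=
  RatFunc.algebraMap_ne_zero M.charpoly_monic.ne_zero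

lemma lamI_isUnit_det {k : Type} [Fintype k] [DecidableEq k] (M : Matrix k k ℝ) :
    IsUnit (lamI M).det := by
  rw [det_lamI, isUnit_iff_ne_zero]
  exact charpoly_FF_ne_zero M

lemma lamI_inv_entry {k : Type} [Fintype k] [DecidableEq k] (M : Matrix k k ℝ) (i j : k) :
    (lamI M)⁻¹ i j =
      algebraMap ℝ[X] FF ((charmatrix M).adjugate i j) / algebraMap ℝ[X] FF M.charpoly := by
  rw [Matrix.inv_def, det_lamI, lamI_eq_map, Ring.inverse_eq_inv, Matrix.smul_apply,
    ← RingHom.mapMatrix_apply, ← RingHom.map_adjugate, RingHom.mapMatrix_apply,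
    Matrix.map_apply, smul_eq_mul, inv_mul_eq_div]

lemma stable_of_div (q d : ℝ[X]) (hd : d ≠ 0)
    (hroot : ∀ z : ℂ, (d.map (algebraMap ℝ ℂ)).IsRoot z → z.re < 0) :
    StableF (algebraMap ℝ[X] FF q / algebraMap ℝ[X] FF d) := by
  intro z hz
  have hdvd : (algebraMap ℝ[X] FF q / algebraMap ℝ[X] FF d).denom ∣ d :=
    (RatFunc.denom_dvd hd).2 ⟨q, rfl⟩
  obtain ⟨w, hw⟩ := hdvd
  apply hroot
  rw [hw, Polynomial.map_mul]
  show Polynomial.eval z _ = 0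
  rw [Polynomial.eval_mul, hz, zero_mul]

lemma stable_const (a : ℝ) : StableF (algebraMap ℝ FF a) := by
  rw [algebraMap_R_FF, ← div_one (algebraMap ℝ[X] FF (C a)), ← map_one (algebraMap ℝ[X] FF)]
  refine stable_of_div _ _ one_ne_zero ?_
  intro z hz
  simp [Polynomial.IsRoot, Polynomial.map_one] at hz

lemma mapF_mul {k l o : Type} [Fintype l] (A : Matrix k l ℝ) (B : Matrix l o ℝ) :
    mapF (A * B) = mapF A * mapF B := Matrix.map_mul

lemma mapF_one {k : Type} [Fintype k] [DecidableEq k] :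
    mapF (1 : Matrix k k ℝ) = 1 :=
  Matrix.map_one _ (map_zero _) (map_one _)

lemma lamI_conj {k l : Type} [Fintype k] [DecidableEq k] [Fintype l] [DecidableEq l]
    (N : Matrix l l ℝ) (Q : Matrix k l ℝ) (h2 : Qᵀ * Q = 1) :
    (lamI N)⁻¹ = mapF Qᵀ * (lamI (Q * N * Qᵀ))⁻¹ * mapF Q := by
  apply inv_eq_right_inv
  have hQN : Qᵀ * (Q * N * Qᵀ) = N * Qᵀ := by
    rw [← Matrix.mul_assoc, ← Matrix.mul_assoc, h2, Matrix.one_mul]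
  have hcomm : lamI N * mapF Qᵀ = mapF Qᵀ * lamI (Q * N * Qᵀ) := by
    simp only [lamI, Matrix.sub_mul, Matrix.mul_sub, Matrix.smul_mul, Matrix.mul_smul,
      Matrix.one_mul, Matrix.mul_one, ← mapF_mul, hQN]
  have h3 : lamI (Q * N * Qᵀ) * (lamI (Q * N * Qᵀ))⁻¹ = 1 :=
    Matrix.mul_nonsing_inv _ (lamI_isUnit_det _)
  simp only [← Matrix.mul_assoc]
  rw [hcomm, Matrix.mul_assoc (mapF Qᵀ) (lamI (Q * N * Qᵀ)), h3, Matrix.mul_one,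
    ← mapF_mul, h2, mapF_one]

lemma lamI_fromBlocks {s t : ℕ} (P : Matrix (Fin s ⊕ Fin t) (Fin s ⊕ Fin t) ℝ)
    (h : P.toBlocks₂₁ = 0) :
    lamI P = fromBlocks (lamI P.toBlocks₁₁) (-(mapF P.toBlocks₁₂)) 0 (lamI P.toBlocks₂₂) := by
  have h' : ∀ a b, P (Sum.inr a) (Sum.inl b) = 0 := by
    intro a b
    have := congrFun (congrFun h a) b
    simpa [Matrix.toBlocks₂₁] using this
  ext (i | i) (j | j) <;>
    simp [lamI, mapF, Matrix.smul_apply, Matrix.one_apply, Matrix.fromBlocks,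
      Matrix.toBlocks₁₁, Matrix.toBlocks₁₂, Matrix.toBlocks₂₁, Matrix.toBlocks₂₂,
      Matrix.sub_apply, h']

lemma lamI_blocks_inv {s t : ℕ} (P : Matrix (Fin s ⊕ Fin t) (Fin s ⊕ Fin t) ℝ)
    (h : P.toBlocks₂₁ = 0) :
    (lamI P)⁻¹ = fromBlocks (lamI P.toBlocks₁₁)⁻¹
      (-((lamI P.toBlocks₁₁)⁻¹ * -(mapF P.toBlocks₁₂) * (lamI P.toBlocks₂₂)⁻¹)) 0
      (lamI P.toBlocks₂₂)⁻¹ := by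
  rw [lamI_fromBlocks P h, inv_fromBlocks_zero₂₁_of_isUnit_iff]
  exact iff_of_true ((isUnit_iff_isUnit_det _).2 (lamI_isUnit_det _))
    ((isUnit_iff_isUnit_det _).2 (lamI_isUnit_det _))

lemma master {p r m' : ℕ}
    (A12 : Matrix (Fin p) (Fin r) ℝ) (N : Matrix (Fin r) (Fin r) ℝ)
    (D : Matrix (Fin p) (Fin m') ℝ) (Cm : Matrix (Fin r) (Fin m') ℝ)
    (BB : Matrix (Fin p) (Fin m') ℝ)
    (s t : Fin p → ℕ) (Q : (i : Fin p) → Matrix (Fin (s i) ⊕ Fin (t i)) (Fin r) ℝ)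
    (hQ : ∀ i, (fun j => A12 i j) ≠ 0 →
      ((Q i)ᵀ * Q i = 1 ∧ (∀ a : Fin (s i), (A12 * (Q i)ᵀ) i (Sum.inl a) = 0)))
    (hD : ∀ i j, BB i j = 0 → D i j = 0)
    (hC : ∀ i, (fun j => A12 i j) ≠ 0 → ∀ j, BB i j = 0 →
      ∀ a : Fin (t i), (Q i * Cm) (Sum.inr a) j = 0)
    (hP21 : ∀ i, (fun j => A12 i j) ≠ 0 → (Q i * N * (Q i)ᵀ).toBlocks₂₁ = 0)
    (hHur : ∀ i, (fun j => A12 i j) ≠ 0 → IsHurwitz ((Q i * N * (Q i)ᵀ).toBlocks₂₂)) :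
    (∀ i j, StableF ((mapF D + mapF A12 * (lamI N)⁻¹ * mapF Cm) i j)) ∧
    (∀ i j, BB i j = 0 → (mapF D + mapF A12 * (lamI N)⁻¹ * mapF Cm) i j = 0) := by
  have hzero : ∀ i, ¬((fun j => A12 i j) ≠ 0) → ∀ j,
      (mapF A12 * (lamI N)⁻¹ * mapF Cm) i j = 0 := by
    intro i hi j
    rw [not_not] at hi
    have h0 : ∀ a, A12 i a = 0 := fun a => congrFun hi a
    simp [Matrix.mul_apply, mapF, h0]
  have hform : ∀ i, (fun j => A12 i j) ≠ 0 → ∀ j,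
      (mapF A12 * (lamI N)⁻¹ * mapF Cm) i j =
        ∑ a : Fin (t i), ∑ b : Fin (t i),
          algebraMap ℝ FF ((A12 * (Q i)ᵀ) i (Sum.inr a)) *
            ((lamI (Q i * N * (Q i)ᵀ).toBlocks₂₂)⁻¹ a b *
              algebraMap ℝ FF ((Q i * Cm) (Sum.inr b) j)) := by
    intro i hi j
    obtain ⟨h2, hinl⟩ := hQ i hi
    have hinl' : ∀ a, mapF (A12 * (Q i)ᵀ) i (Sum.inl a) = 0 := by
      intro a; simp [mapF, hinl a]
    rw [lamI_conj N (Q i) h2]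
    have hre : mapF A12 * (mapF (Q i)ᵀ * (lamI (Q i * N * (Q i)ᵀ))⁻¹ * mapF (Q i)) * mapF Cm
        = mapF (A12 * (Q i)ᵀ) * (lamI (Q i * N * (Q i)ᵀ))⁻¹ * mapF ((Q i) * Cm) := by
      simp only [mapF_mul, Matrix.mul_assoc]
    rw [hre, lamI_blocks_inv _ (hP21 i hi)]
    simp only [Matrix.mul_apply, Fintype.sum_sum_type, Matrix.fromBlocks_apply₁₁,
      Matrix.fromBlocks_apply₁₂, Matrix.fromBlocks_apply₂₁, Matrix.fromBlocks_apply₂₂,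
      hinl', zero_mul, Finset.sum_const_zero, zero_add, Matrix.zero_apply, mul_zero]
    rw [Finset.sum_comm]
    apply Finset.sum_congr rfl
    intro a _
    rw [Finset.sum_mul]
    apply Finset.sum_congr rfl
    intro b _
    simp only [mapF, Matrix.map_apply, Matrix.mul_apply, _root_.map_sum, _root_.map_mul]
    ring
  constructor
  · intro i j
    by_cases hi : (fun j => A12 i j) ≠ 0
    · have hE : (mapF A12 * (lamI N)⁻¹ * mapF Cm) i j =
          algebraMap ℝ[X] FF (∑ a : Fin (t i), ∑ b : Fin (t i),
            C ((A12 * (Q i)ᵀ) i (Sum.inr a)) *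
              (charmatrix (Q i * N * (Q i)ᵀ).toBlocks₂₂).adjugate a b *
              C ((Q i * Cm) (Sum.inr b) j)) /
          algebraMap ℝ[X] FF (Q i * N * (Q i)ᵀ).toBlocks₂₂.charpoly := by
        rw [hform i hi j]
        have hpt : ∀ (a b : Fin (t i)),
            algebraMap ℝ FF ((A12 * (Q i)ᵀ) i (Sum.inr a)) *
              ((lamI (Q i * N * (Q i)ᵀ).toBlocks₂₂)⁻¹ a b *
                algebraMap ℝ FF ((Q i * Cm) (Sum.inr b) j)) =
            algebraMap ℝ[X] FF (C ((A12 * (Q i)ᵀ) i (Sum.inr a)) *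
              (charmatrix (Q i * N * (Q i)ᵀ).toBlocks₂₂).adjugate a b *
              C ((Q i * Cm) (Sum.inr b) j)) /
            algebraMap ℝ[X] FF (Q i * N * (Q i)ᵀ).toBlocks₂₂.charpoly := by
          intro a b
          rw [lamI_inv_entry, algebraMap_R_FF, algebraMap_R_FF, _root_.map_mul, _root_.map_mul]
          field_simp
        simp_rw [hpt, ← Finset.sum_div, ← map_sum]
      rw [Matrix.add_apply, hE]
      have hD' : mapF D i j = algebraMap ℝ FF (D i j) := rfl
      rw [hD', algebraMap_R_FF]
      have heq : algebraMap ℝ[X] FF (C (D i j)) +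
          algebraMap ℝ[X] FF (∑ a : Fin (t i), ∑ b : Fin (t i),
            C ((A12 * (Q i)ᵀ) i (Sum.inr a)) *
              (charmatrix (Q i * N * (Q i)ᵀ).toBlocks₂₂).adjugate a b *
              C ((Q i * Cm) (Sum.inr b) j)) /
          algebraMap ℝ[X] FF (Q i * N * (Q i)ᵀ).toBlocks₂₂.charpoly =
          algebraMap ℝ[X] FF (C (D i j) * (Q i * N * (Q i)ᵀ).toBlocks₂₂.charpoly +
            ∑ a : Fin (t i), ∑ b : Fin (t i),
            C ((A12 * (Q i)ᵀ) i (Sum.inr a)) *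
              (charmatrix (Q i * N * (Q i)ᵀ).toBlocks₂₂).adjugate a b *
              C ((Q i * Cm) (Sum.inr b) j)) /
          algebraMap ℝ[X] FF (Q i * N * (Q i)ᵀ).toBlocks₂₂.charpoly := by
        rw [map_add, _root_.map_mul, add_div, mul_div_assoc, div_self (charpoly_FF_ne_zero _), mul_one]
      rw [heq]
      exact stable_of_div _ _ (Matrix.charpoly_monic _).ne_zero (hHur i hi)
    · rw [Matrix.add_apply, hzero i hi j, add_zero]
      exact stable_const (D i j)
  · intro i j hbb
    have hD0 : mapF D i j = 0 := by simp [mapF, hD i j hbb]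
    rw [Matrix.add_apply, hD0, zero_add]
    by_cases hi : (fun j => A12 i j) ≠ 0
    · rw [hform i hi j]
      simp [hC i hi j hbb]
    · exact hzero i hi j

/-- under the structural conditions (i)-(vi), the SRTR pair `(W, V)`
obtained from `K` is stable and satisfies the sparsity patterns encoded by the binary
matrices `B_W` and `B_V`. -/
theorem stmt_16 (p r m : ℕ) (hp : 0 < p) (hr : 0 < r) (hm : 0 < m)
    (A11 : Matrix (Fin p) (Fin p) ℝ) (A12 : Matrix (Fin p) (Fin r) ℝ)
    (A21 : Matrix (Fin r) (Fin p) ℝ) (A22 : Matrix (Fin r) (Fin r) ℝ)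
    (B1 : Matrix (Fin p) (Fin m) ℝ) (B2 : Matrix (Fin r) (Fin m) ℝ)
    (BW : Matrix (Fin p) (Fin p) ℝ) (BV : Matrix (Fin p) (Fin m) ℝ)
    (hBW : ∀ i j, BW i j = 0 ∨ BW i j = 1) (hBV : ∀ i k, BV i k = 0 ∨ BV i k = 1)
    (K : Matrix (Fin r) (Fin p) ℝ)
    (s t : Fin p → ℕ)
    (Q : (i : Fin p) → Matrix (Fin (s i) ⊕ Fin (t i)) (Fin r) ℝ)
    (hQ : ∀ i : Fin p, (fun j : Fin r => A12 i j) ≠ 0 →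
      (Q i * (Q i)ᵀ = 1 ∧ (Q i)ᵀ * Q i = 1 ∧ 0 < t i ∧ s i + t i = r ∧
        (∀ a : Fin (s i), (A12 * (Q i)ᵀ) i (Sum.inl a) = 0) ∧
        (∀ a : Fin (t i), (A12 * (Q i)ᵀ) i (Sum.inr a) =
          if (a : ℕ) + 1 = t i then Real.sqrt (∑ j : Fin r, A12 i j ^ 2) else 0)))
    (h1 : ∀ i j, BW i j = 0 → (A11 - A12 * K) i j = 0)
    (h2 : ∀ i k, BV i k = 0 → B1 i k = 0)
    (h3 : ∀ i : Fin p, (fun j : Fin r => A12 i j) ≠ 0 → ∀ j, BW i j = 0 →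
      ∀ a : Fin (t i), toRows₂ (Q i * AKmat A11 A12 A21 A22 K) a j = 0)
    (h4 : ∀ i : Fin p, (fun j : Fin r => A12 i j) ≠ 0 → ∀ k, BV i k = 0 →
      ∀ a : Fin (t i), toRows₂ (Q i * (K * B1 + B2)) a k = 0)
    (h5 : ∀ i : Fin p, (fun j : Fin r => A12 i j) ≠ 0 →
      (Q i * (A22 + K * A12) * (Q i)ᵀ).toBlocks₂₁ = 0)
    (h6 : ∀ i : Fin p, (fun j : Fin r => A12 i j) ≠ 0 →
      IsHurwitz ((Q i * (A22 + K * A12) * (Q i)ᵀ).toBlocks₂₂)) :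
    (∀ i j, StableF (srtrW A11 A12 A21 A22 K i j)) ∧
    (∀ i k, StableF (srtrV A12 A22 B1 B2 K i k)) ∧
    (∀ i j, BW i j = 0 → srtrW A11 A12 A21 A22 K i j = 0) ∧
    (∀ i k, BV i k = 0 → srtrV A12 A22 B1 B2 K i k = 0) := by
  have hmW := master A12 (A22 + K * A12) (A11 - A12 * K) (AKmat A11 A12 A21 A22 K) BW s t Q
    (fun i hi => ⟨(hQ i hi).2.1, (hQ i hi).2.2.2.2.1⟩) h1
    (fun i hi j hbw a => h3 i hi j hbw a) h5 h6
  have hmV := master A12 (A22 + K * A12) B1 (K * B1 + B2) BV s t Q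
    (fun i hi => ⟨(hQ i hi).2.1, (hQ i hi).2.2.2.2.1⟩) h2
    (fun i hi k hbv a => h4 i hi k hbv a) h5 h6
  exact ⟨fun i j => hmW.1 i j, fun i k => hmV.1 i k,
    fun i j hb => hmW.2 i j hb, fun i k hb => hmV.2 i k hb⟩
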